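/- Let Γ be a finite abelian group and σ : Γ × Γ → ℂˣ a normalised symmetric 2-cochain such that ∂(σ)(a;b,c) := σ(a,b)σ(a,c)σ(a,b+c)⁻¹ takes values in {±1} and, for each fixed b,c, the map a ↦ ∂(σ)(a;b,c) is a group homomorphism Γ → {±1}. Then the pair (σ, ∂(σ)) is an abelian 3-cocycle on Γ, i.e. ω := ∂(σ) satisfies the 3-cocycle identity ω(b,c,d)ω(a,b+c,d)ω(a,b,c) = ω(a+b,c,d)ω(a,b,c+d) and the two hexagon equations ω(b,a,c)/(ω(a,b,c)ω(b,c,a)) = σ(a,b+c)/(σ(a,b)σ(a,c)) and ω(a,b,c)ω(c,a,b)/ω(a,c,b) = σ(a+b,c)/(σ(a,c)σ(b,c)). -/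

import Mathlib

/-- The coboundary-like map `∂(σ)(a;b,c) = σ(a,b) σ(a,c) σ(a,b+c)⁻¹` measuring the
failure of bimultiplicativity of a 2-cochain `σ`. -/
def dOmega {Γ : Type*} [AddCommGroup Γ] (σ : Γ → Γ → ℂˣ) (a b c : Γ) : ℂˣ :=
  σ a b * σ a c * (σ a (b + c))⁻¹

/-- If `σ` is a normalised symmetric 2-cochain on a finite abelian group `Γ` such that
`∂(σ)` takes values in `{±1}` and is a group homomorphism in the first argument, then
`(σ, ∂(σ))` is an abelian 3-cocycle: `ω := ∂(σ)` satisfies the 3-cocycle identity and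
the two hexagon equations. -/
theorem stmt_3 (Γ : Type*) [AddCommGroup Γ] [Finite Γ] (σ : Γ → Γ → ℂˣ)
    (hnorm : ∀ a : Γ, σ a 0 = 1 ∧ σ 0 a = 1)
    (hsymm : ∀ a b : Γ, σ a b = σ b a)
    (hpm : ∀ a b c : Γ, dOmega σ a b c = 1 ∨ dOmega σ a b c = -1)
    (hhom : ∀ a a' b c : Γ, dOmega σ (a + a') b c = dOmega σ a b c * dOmega σ a' b c) :
    (∀ a b c d : Γ,
      dOmega σ b c d * dOmega σ a (b + c) d * dOmega σ a b c =
        dOmega σ (a + b) c d * dOmega σ a b (c + d)) ∧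
    (∀ a b c : Γ,
      dOmega σ b a c / (dOmega σ a b c * dOmega σ b c a) =
        σ a (b + c) / (σ a b * σ a c)) ∧
    (∀ a b c : Γ,
      dOmega σ a b c * dOmega σ c a b / dOmega σ a c b =
        σ (a + b) c / (σ a c * σ b c)) := by
  have hinv : ∀ a b c : Γ, (dOmega σ a b c)⁻¹ = dOmega σ a b c := by
    intro a b c
    rcases hpm a b c with h | h <;> rw [h] <;> simp
  have hswap : ∀ a b c : Γ, dOmega σ a b c = dOmega σ a c b := by
    intro a b c
    simp only [dOmega, add_comm c b, mul_comm (σ a b) (σ a c)]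
  refine ⟨?_, ?_, ?_⟩
  · intro a b c d
    rw [hhom]
    have key : dOmega σ a (b + c) d * dOmega σ a b c =
        dOmega σ a c d * dOmega σ a b (c + d) := by
      rw [Units.ext_iff]
      simp only [dOmega, add_assoc, Units.val_mul, Units.val_inv_eq_inv_val]
      field_simp
    rw [mul_assoc, key, mul_left_comm, ← mul_assoc]
  · intro a b c
    rw [hswap b a c, mul_comm, ← div_div, div_self', one_div]
    simp [dOmega, mul_inv_rev, div_eq_mul_inv, inv_inv, mul_comm]
  · intro a b c
    rw [hswap a b c, mul_comm, mul_div_assoc, div_self', mul_one, ← hinv c a b]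
    simp [dOmega, mul_inv_rev, div_eq_mul_inv, inv_inv, hsymm c a, hsymm c b,
      hsymm c (a + b), mul_comm]
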